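/- lim_{k→∞} g_k(η_k) = 2 and lim_{k→∞} ψ_k(η_k) = 2, where ψ_k(η_k) = −η_k·Δ_k′(η_k). -/

import Mathlib

open Filter Set

/-- `C_k = (2k-2)!/(k-1)!` as a real number. -/
noncomputable def Cc (k : ℕ) : ℝ :=
  ((2 * k - 2).factorial : ℝ) / ((k - 1).factorial : ℝ)

/-- `p_k(z) = 1 − 2z − (7+8k)z²`. -/
noncomputable def Pp (k : ℕ) (z : ℝ) : ℝ := 1 - 2 * z - (7 + 8 * k) * z ^ 2

/-- `h_k(z) = 1 − z − C_k·z^{2k+1}`. -/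
noncomputable def Hh (k : ℕ) (z : ℝ) : ℝ := 1 - z - Cc k * z ^ (2 * k + 1)

/-- `Δ_k(z) = p_k(z) + 4·C_k·z^{2k+1}·h_k(z)`. -/
noncomputable def Dd (k : ℕ) (z : ℝ) : ℝ :=
  Pp k z + 4 * Cc k * z ^ (2 * k + 1) * Hh k z

/-- `g_k(z) = 2 − C_k·z^{2k−1}·(h_k(z) − C_k·z^{2k−1})`. -/
noncomputable def Gg (k : ℕ) (z : ℝ) : ℝ :=
  2 - Cc k * z ^ (2 * k - 1) * (Hh k z - Cc k * z ^ (2 * k - 1))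

/-- `ρ_k = 1/(1+√(8+8k))`, the positive root of `p_k`. -/
noncomputable def rho (k : ℕ) : ℝ := 1 / (1 + Real.sqrt (8 + 8 * k))

/-- `ψ_k(x) = −x·Δ_k′(x)`. -/
noncomputable def psi (k : ℕ) (x : ℝ) : ℝ := -x * deriv (Dd k) x

/-- `η` is a root of `Δ_k` in the interval `(0, 1/√(8+8k))`, and is the unique such root. -/
def IsEta (k : ℕ) (η : ℝ) : Prop :=
  η ∈ Set.Ioo (0 : ℝ) (1 / Real.sqrt (8 + 8 * k)) ∧ Dd k η = 0 ∧
    ∀ x ∈ Set.Ioo (0 : ℝ) (1 / Real.sqrt (8 + 8 * k)), Dd k x = 0 → x = η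

lemma fact_add_le (m : ℕ) : ∀ n : ℕ, (m + n).factorial ≤ m.factorial * (m + n) ^ n := by
  intro n
  induction n with
  | zero => simp
  | succ n ih =>
    have h1 : m + (n + 1) = (m + n) + 1 := by omega
    calc (m + (n+1)).factorial = (m + n + 1) * (m + n).factorial := by
          rw [h1, Nat.factorial_succ]
      _ ≤ (m + n + 1) * (m.factorial * (m+n)^n) := Nat.mul_le_mul_left _ ih
      _ ≤ (m + n + 1) * (m.factorial * (m+n+1)^n) :=
          Nat.mul_le_mul_left _ (Nat.mul_le_mul_left _ (Nat.pow_le_pow_left (Nat.le_succ _) n))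
      _ = m.factorial * (m + (n+1))^(n+1) := by rw [h1]; ring

lemma Cc_nonneg (k : ℕ) : 0 ≤ Cc k := by
  unfold Cc; positivity

lemma Cc_le (k : ℕ) (hk : 2 ≤ k) : Cc k ≤ (2*(k:ℝ)) ^ (k-1) := by
  have h2 : 2*k-2 = (k-1) + (k-1) := by omega
  have h1 : (2*k-2).factorial ≤ (k-1).factorial * (2*k) ^ (k-1) := by
    calc (2*k-2).factorial = ((k-1)+(k-1)).factorial := by rw [h2]
      _ ≤ (k-1).factorial * ((k-1)+(k-1))^(k-1) := fact_add_le _ _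
      _ ≤ (k-1).factorial * (2*k)^(k-1) :=
          Nat.mul_le_mul_left _ (Nat.pow_le_pow_left (by omega) _)
  have hpos : (0:ℝ) < ((k-1).factorial : ℝ) := by positivity
  rw [Cc, div_le_iff₀ hpos]
  calc ((2*k-2).factorial : ℝ) ≤ (((k-1).factorial * (2*k)^(k-1) : ℕ) : ℝ) := by
        exact_mod_cast Nat.cast_le.mpr h1
    _ = (2*(k:ℝ))^(k-1) * ((k-1).factorial:ℝ) := by push_cast; ring

lemma hasDerivAt_Dd (k : ℕ) (x : ℝ) :
    HasDerivAt (Dd k) (-2 - 2*(7+8*(k:ℝ))*x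
      + 4 * Cc k * ((2*(k:ℝ)+1) * x^(2*k) * Hh k x
        + x^(2*k+1) * (-1 - Cc k * ((2*(k:ℝ)+1) * x^(2*k))))) x := by
  have hpow : HasDerivAt (fun z:ℝ => z^(2*k+1)) ((2*(k:ℝ)+1) * x^(2*k)) x := by
    have := hasDerivAt_pow (2*k+1) x
    simp only [Nat.add_sub_cancel] at this
    refine this.congr_deriv ?_
    push_cast; ring
  have hH : HasDerivAt (Hh k) (-1 - Cc k * ((2*(k:ℝ)+1) * x^(2*k))) x := by
    exact ((hasDerivAt_id x).const_sub (1:ℝ)).sub (hpow.const_mul (Cc k))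
  have hP : HasDerivAt (Pp k) (-2 - 2*(7+8*(k:ℝ))*x) x := by
    have h := (((hasDerivAt_id x).const_mul (2:ℝ)).const_sub (1:ℝ)).sub
      ((hasDerivAt_pow 2 x).const_mul ((7:ℝ)+8*k))
    refine h.congr_deriv ?_
    norm_num
    ring
  have h := hP.add ((hpow.mul hH).const_mul (4 * Cc k))
  have heq : Dd k = fun z => Pp k z + 4 * Cc k * (z^(2*k+1) * Hh k z) := by
    funext z; simp only [Dd]; ring
  rw [heq]
  exact h

lemma psi_eq (k : ℕ) (x : ℝ) : psi k x =
    -x * (-2 - 2*(7+8*(k:ℝ))*x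
      + 4 * Cc k * ((2*(k:ℝ)+1) * x^(2*k) * Hh k x
        + x^(2*k+1) * (-1 - Cc k * ((2*(k:ℝ)+1) * x^(2*k))))) := by
  rw [psi, (hasDerivAt_Dd k x).deriv]

/-- `lim_{k→∞} g_k(η_k) = 2` and `lim_{k→∞} ψ_k(η_k) = 2`, where
`ψ_k(η_k) = −η_k·Δ_k′(η_k)` and `η_k` is the unique root of `Δ_k` in `(0, 1/√(8+8k))`. -/
theorem statement10 (η : ℕ → ℝ) (hη : ∀ k, 2 ≤ k → IsEta k (η k)) :
    Tendsto (fun k : ℕ => Gg k (η k)) atTop (nhds 2) ∧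
    Tendsto (fun k : ℕ => psi k (η k)) atTop (nhds 2) := by
  set u : ℕ → ℝ := fun k => Cc k * η k ^ (2*k-1) with hu_def
  have hpos : ∀ k : ℕ, 2 ≤ k → 0 < η k := fun k hk => ((hη k hk).1).1
  have hsq : ∀ k : ℕ, 2 ≤ k → η k ^ 2 ≤ 1 / (8*(k:ℝ)) := by
    intro k hk
    have hk' : (2:ℝ) ≤ (k:ℝ) := by exact_mod_cast hk
    have h8 : (0:ℝ) < 8 + 8*(k:ℝ) := by positivity
    have hlt := ((hη k hk).1).2
    have h1 : η k ^ 2 ≤ (1 / Real.sqrt (8 + 8*(k:ℝ)))^2 :=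
      pow_le_pow_left₀ (hpos k hk).le hlt.le 2
    have h2 : (1 / Real.sqrt (8 + 8*(k:ℝ)))^2 = 1/(8+8*(k:ℝ)) := by
      rw [div_pow, one_pow, Real.sq_sqrt h8.le]
    have h3 : (0:ℝ) < 8*(k:ℝ) := by linarith
    have h4 : 1/(8+8*(k:ℝ)) ≤ 1/(8*(k:ℝ)) :=
      one_div_le_one_div_of_le h3 (by linarith)
    rw [h2] at h1
    linarith
  have hlt1 : ∀ k : ℕ, 2 ≤ k → η k ≤ 1 := by
    intro k hk
    have hk' : (2:ℝ) ≤ (k:ℝ) := by exact_mod_cast hk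
    have h16 : 1/(8*(k:ℝ)) ≤ 1/16 := one_div_le_one_div_of_le (by norm_num) (by linarith)
    nlinarith [sq_nonneg (η k - 1), hsq k hk]
  have hu_nonneg : ∀ k : ℕ, 2 ≤ k → 0 ≤ u k := by
    intro k hk
    simp only [hu_def]
    exact mul_nonneg (Cc_nonneg k) (pow_nonneg (hpos k hk).le _)
  have hu_le : ∀ k : ℕ, 2 ≤ k → u k ≤ (1/4:ℝ)^(k-1) := by
    intro k hk
    have hk' : (2:ℝ) ≤ (k:ℝ) := by exact_mod_cast hk
    have h8 : (0:ℝ) < 8*(k:ℝ) := by linarith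
    have hinv : (0:ℝ) ≤ 1/(8*(k:ℝ)) := by positivity
    have h1 : η k ^ (2*k-1) = (η k ^2)^(k-1) * η k := by
      rw [← pow_mul, ← pow_succ]
      congr 1
      omega
    have h2 : (η k^2)^(k-1) ≤ (1/(8*(k:ℝ)))^(k-1) :=
      pow_le_pow_left₀ (sq_nonneg _) (hsq k hk) _
    have h3 : η k ^ (2*k-1) ≤ (1/(8*(k:ℝ)))^(k-1) := by
      rw [h1]
      calc (η k^2)^(k-1) * η k ≤ (1/(8*(k:ℝ)))^(k-1) * 1 :=
            mul_le_mul h2 (hlt1 k hk) (hpos k hk).le (pow_nonneg hinv _)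
        _ = _ := mul_one _
    have hk0 : (k:ℝ) ≠ 0 := by linarith
    simp only [hu_def]
    calc Cc k * η k ^ (2*k-1) ≤ (2*(k:ℝ))^(k-1) * (1/(8*(k:ℝ)))^(k-1) :=
          mul_le_mul (Cc_le k hk) h3 (pow_nonneg (hpos k hk).le _)
            (pow_nonneg (by positivity : (0:ℝ) ≤ 2*(k:ℝ)) _)
      _ = (2*(k:ℝ) * (1/(8*(k:ℝ))))^(k-1) := (mul_pow _ _ _).symm
      _ = (1/4:ℝ)^(k-1) := by
          congr 1
          field_simp
          ring
  have hu_le1 : ∀ k : ℕ, 2 ≤ k → u k ≤ 1 :=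
    fun k hk => le_trans (hu_le k hk) (pow_le_one₀ (by norm_num) (by norm_num))
  -- tendsto facts
  have t8k : Tendsto (fun k:ℕ => 1/(8*(k:ℝ))) atTop (nhds 0) := by
    have h : Tendsto (fun k:ℕ => (8*(k:ℝ))) atTop atTop :=
      tendsto_natCast_atTop_atTop.const_mul_atTop (by norm_num)
    exact (tendsto_inv_atTop_zero.comp h).congr fun x => (one_div _).symm
  have tv2 : Tendsto (fun k : ℕ => η k^2) atTop (nhds 0) := by
    apply squeeze_zero_norm' _ t8k
    filter_upwards [eventually_ge_atTop 2] with k hk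
    rw [Real.norm_eq_abs, abs_of_nonneg (sq_nonneg _)]
    exact hsq k hk
  have tv : Tendsto η atTop (nhds 0) := by
    have h := (Real.continuous_sqrt.tendsto 0).comp tv2
    rw [Real.sqrt_zero] at h
    apply h.congr'
    filter_upwards [eventually_ge_atTop 2] with k hk
    exact Real.sqrt_sq (hpos k hk).le
  have tgeo : Tendsto (fun k:ℕ => (1/4:ℝ)^(k-1)) atTop (nhds 0) :=
    (tendsto_pow_atTop_nhds_zero_of_lt_one (by norm_num) (by norm_num)).comp
      (tendsto_sub_atTop_nat 1)
  have tu : Tendsto u atTop (nhds 0) := by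
    apply squeeze_zero_norm' _ tgeo
    filter_upwards [eventually_ge_atTop 2] with k hk
    rw [Real.norm_eq_abs, abs_of_nonneg (hu_nonneg k hk)]
    exact hu_le k hk
  have epow : ∀ k : ℕ, 2 ≤ k → η k ^(2*k+1) = η k ^(2*k-1) * η k^2 := by
    intro k hk; rw [← pow_add]; congr 1; omega
  have epow' : ∀ k : ℕ, 2 ≤ k → η k ^(2*k) = η k ^(2*k-1) * η k := by
    intro k hk; rw [← pow_succ]; congr 1; omega
  have hw_eq : ∀ k : ℕ, 2 ≤ k → (7+8*(k:ℝ))*η k^2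
      = 1 - 2*η k + 4*u k*η k^2*(1 - η k - u k*η k^2) := by
    intro k hk
    have hroot := (hη k hk).2.1
    simp only [Dd, Pp, Hh] at hroot
    rw [epow k hk] at hroot
    simp only [hu_def]
    linear_combination -hroot
  have tw : Tendsto (fun k : ℕ => (7+8*(k:ℝ))*η k^2) atTop (nhds 1) := by
    have h : Tendsto (fun k : ℕ => 1 - 2*η k + 4*u k*η k^2*(1 - η k - u k*η k^2)) atTop
        (nhds (1 - 2*0 + 4*0*0^2*(1 - 0 - 0*0^2))) :=
      (tendsto_const_nhds.sub (tv.const_mul 2)).add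
        (((tu.const_mul 4).mul (tv.pow 2)).mul
          ((tendsto_const_nhds.sub tv).sub (tu.mul (tv.pow 2))))
    rw [show (1 - 2*0 + 4*0*0^2*(1 - 0 - 0*0^2) : ℝ) = 1 by norm_num] at h
    apply h.congr'
    filter_upwards [eventually_ge_atTop 2] with k hk
    exact (hw_eq k hk).symm
  constructor
  · -- Gg part
    have hg_eq : ∀ k : ℕ, 2 ≤ k → Gg k (η k) = 2 - u k * ((1 - η k - u k * η k^2) - u k) := by
      intro k hk
      simp only [Gg, Hh, hu_def]
      rw [epow k hk]
      ring
    have h : Tendsto (fun k : ℕ => 2 - u k * ((1 - η k - u k*η k^2) - u k)) atTop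
        (nhds (2 - 0*((1 - 0 - 0*0^2) - 0))) :=
      tendsto_const_nhds.sub
        (tu.mul (((tendsto_const_nhds.sub tv).sub (tu.mul (tv.pow 2))).sub tu))
    rw [show (2 - 0*((1 - 0 - 0*0^2) - 0) : ℝ) = 2 by norm_num] at h
    apply h.congr'
    filter_upwards [eventually_ge_atTop 2] with k hk
    exact (hg_eq k hk).symm
  · -- psi part
    have hpsi_eq : ∀ k : ℕ, 2 ≤ k → psi k (η k) =
        (2*η k + 2*((7+8*(k:ℝ))*η k^2) + 4*u k*η k^3)
        + -(4*(2*(k:ℝ)+1)*u k*η k^2) * (1 - η k - u k*η k^2)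
        + 4*(2*(k:ℝ)+1)*(u k)^2*(η k)^4 := by
      intro k hk
      rw [psi_eq]
      simp only [Hh, hu_def]
      rw [epow k hk, epow' k hk]
      ring
    have tA : Tendsto (fun k : ℕ => 2*η k + 2*((7+8*(k:ℝ))*η k^2) + 4*u k*η k^3) atTop
        (nhds (2*0 + 2*1 + 4*0*0^3)) :=
      ((tv.const_mul 2).add (tw.const_mul 2)).add ((tu.const_mul 4).mul (tv.pow 3))
    rw [show (2*0 + 2*1 + 4*0*0^3 : ℝ) = 2 by norm_num] at tA
    have t4u : Tendsto (fun k : ℕ => 4 * u k) atTop (nhds 0) := by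
      have := tu.const_mul (4:ℝ)
      rwa [show (4*(0:ℝ)) = 0 by norm_num] at this
    have tB : Tendsto (fun k : ℕ => -(4*(2*(k:ℝ)+1)*u k*η k^2) * (1 - η k - u k*η k^2))
        atTop (nhds 0) := by
      apply squeeze_zero_norm' _ t4u
      filter_upwards [eventually_ge_atTop 2] with k hk
      have hk' : (2:ℝ) ≤ (k:ℝ) := by exact_mod_cast hk
      have h8 : (0:ℝ) < 8*(k:ℝ) := by linarith
      have h2 := hpos k hk
      have h3 := hlt1 k hk
      have h4 := hu_nonneg k hk
      have h5 := hu_le1 k hk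
      have hsq' : η k^2 * (8*(k:ℝ)) ≤ 1 := by
        have := hsq k hk
        rw [le_div_iff₀ h8] at this
        exact this
      have hs1 : (2*(k:ℝ)+1)*η k^2 ≤ 1 := by nlinarith [sq_nonneg (η k)]
      have hs0 : (0:ℝ) ≤ (2*(k:ℝ)+1)*η k^2 := by positivity
      have hη2 : η k^2 ≤ 1 := by nlinarith
      have hX1 : u k * η k^2 ≤ 1 := by nlinarith
      have hX0 : 0 ≤ u k * η k^2 := mul_nonneg h4 (sq_nonneg _)
      have hh1 : |1 - η k - u k * η k^2| ≤ 1 := abs_le.mpr ⟨by nlinarith, by nlinarith⟩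
      have c0 : (0:ℝ) ≤ 4*(2*(k:ℝ)+1)*u k*η k^2 :=
        mul_nonneg (mul_nonneg (by positivity) h4) (sq_nonneg _)
      rw [Real.norm_eq_abs, abs_mul, abs_neg, abs_of_nonneg c0]
      calc 4*(2*(k:ℝ)+1)*u k*η k^2 * |1 - η k - u k*η k^2|
          ≤ 4*(2*(k:ℝ)+1)*u k*η k^2 * 1 := mul_le_mul_of_nonneg_left hh1 c0
        _ ≤ 4 * u k := by nlinarith [mul_le_mul_of_nonneg_left hs1 h4]
    have tC : Tendsto (fun k : ℕ => 4*(2*(k:ℝ)+1)*(u k)^2*(η k)^4) atTop (nhds 0) := by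
      apply squeeze_zero_norm' _ t4u
      filter_upwards [eventually_ge_atTop 2] with k hk
      have hk' : (2:ℝ) ≤ (k:ℝ) := by exact_mod_cast hk
      have h8 : (0:ℝ) < 8*(k:ℝ) := by linarith
      have h2 := hpos k hk
      have h3 := hlt1 k hk
      have h4 := hu_nonneg k hk
      have h5 := hu_le1 k hk
      have hsq' : η k^2 * (8*(k:ℝ)) ≤ 1 := by
        have := hsq k hk
        rw [le_div_iff₀ h8] at this
        exact this
      have hs1 : (2*(k:ℝ)+1)*η k^2 ≤ 1 := by nlinarith [sq_nonneg (η k)]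
      have hη2 : η k^2 ≤ 1 := by nlinarith
      have hX1 : u k * η k^2 ≤ 1 := by nlinarith
      have hX0 : 0 ≤ u k * η k^2 := mul_nonneg h4 (sq_nonneg _)
      have h6 : u k * ((2*(k:ℝ)+1)*η k^2) ≤ u k * 1 := mul_le_mul_of_nonneg_left hs1 h4
      have c0 : (0:ℝ) ≤ 4*(2*(k:ℝ)+1)*(u k)^2*(η k)^4 := by positivity
      rw [Real.norm_eq_abs, abs_of_nonneg c0]
      nlinarith [mul_le_mul h6 hX1 hX0 (mul_nonneg h4 zero_le_one : (0:ℝ) ≤ u k * 1)]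
    have h := (tA.add tB).add tC
    rw [show ((2:ℝ) + 0 + 0) = 2 by norm_num] at h
    apply h.congr'
    filter_upwards [eventually_ge_atTop 2] with k hk
    exact (hpsi_eq k hk).symm
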